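/- Let G be a triangle-free graph in which every pair of non-adjacent vertices has a unique common neighbour. A subset S ⊆ V(G) is a mutual-visibility set of G if and only if every connected component of the induced subgraph G[S] is isomorphic to K₁ or K₂ (i.e., G[S] is a disjoint union of an induced matching and isolated vertices). -/

import Mathlib

open scoped Classical

def SimpleGraph.MutualVisibilitySet {V : Type*} (G : SimpleGraph V) (S : Set V) : Prop :=
  ∀ u ∈ S, ∀ v ∈ S, ∃ p : G.Walk u v, p.length = G.dist u v ∧
    ∀ w ∈ p.support, w ∈ S → w = u ∨ w = v

open SimpleGraph in
lemma aux_deg_of_iso {W : Type*} (H : SimpleGraph W)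
    (hc : ∀ c : H.ConnectedComponent,
        Nonempty (H.induce c.supp ≃g (⊤ : SimpleGraph (Fin 1))) ∨
        Nonempty (H.induce c.supp ≃g (⊤ : SimpleGraph (Fin 2)))) :
    ∀ a b c : W, H.Adj b a → H.Adj b c → a = c := by
  intro a b c hba hbc
  by_contra hne
  set K := H.connectedComponentMk b with hK
  have ha : a ∈ K.supp := (ConnectedComponent.mem_supp_iff _ _).2
    (ConnectedComponent.sound hba.symm.reachable)
  have hb : b ∈ K.supp := (ConnectedComponent.mem_supp_iff _ _).2 rfl
  have hcc : c ∈ K.supp := (ConnectedComponent.mem_supp_iff _ _).2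
    (ConnectedComponent.sound hbc.symm.reachable)
  have key : ∀ n, n ≤ 2 → ¬ Nonempty (H.induce K.supp ≃g (⊤ : SimpleGraph (Fin n))) := by
    rintro n hn ⟨e⟩
    have h1 : e ⟨a, ha⟩ ≠ e ⟨b, hb⟩ := by
      simp only [ne_eq, EmbeddingLike.apply_eq_iff_eq, Subtype.mk.injEq]
      exact hba.ne'
    have h2 : e ⟨b, hb⟩ ≠ e ⟨c, hcc⟩ := by
      simp only [ne_eq, EmbeddingLike.apply_eq_iff_eq, Subtype.mk.injEq]
      exact hbc.ne
    have h3 : e ⟨a, ha⟩ ≠ e ⟨c, hcc⟩ := by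
      simp only [ne_eq, EmbeddingLike.apply_eq_iff_eq, Subtype.mk.injEq]
      exact hne
    have v1 := (e ⟨a, ha⟩).isLt
    have v2 := (e ⟨b, hb⟩).isLt
    have v3 := (e ⟨c, hcc⟩).isLt
    have n1 : (e ⟨a, ha⟩ : Fin n).val ≠ (e ⟨b, hb⟩ : Fin n).val := fun h => h1 (Fin.ext h)
    have n2 : (e ⟨b, hb⟩ : Fin n).val ≠ (e ⟨c, hcc⟩ : Fin n).val := fun h => h2 (Fin.ext h)
    have n3 : (e ⟨a, ha⟩ : Fin n).val ≠ (e ⟨c, hcc⟩ : Fin n).val := fun h => h3 (Fin.ext h)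
    omega
  rcases hc K with h | h
  · exact key 1 (by norm_num) h
  · exact key 2 le_rfl h

open SimpleGraph in
lemma aux_iso_of_deg {W : Type*} (H : SimpleGraph W)
    (hdeg : ∀ a b c : W, H.Adj b a → H.Adj b c → a = c)
    (c : H.ConnectedComponent) :
    Nonempty (H.induce c.supp ≃g (⊤ : SimpleGraph (Fin 1))) ∨
    Nonempty (H.induce c.supp ≃g (⊤ : SimpleGraph (Fin 2))) := by
  obtain ⟨v, rfl⟩ := c.exists_rep
  have hreach : ∀ u, H.Reachable u v → u = v ∨ H.Adj v u := by
    intro u hu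
    obtain ⟨p⟩ := hu
    induction p with
    | nil => exact Or.inl rfl
    | cons h q ih =>
      rcases ih with rfl | hadj
      · exact Or.inr h.symm
      · exact Or.inl (hdeg _ _ _ h.symm hadj.symm)
  have hmk : Quot.mk H.Reachable v = H.connectedComponentMk v := rfl
  by_cases hv : ∃ w, H.Adj v w
  · obtain ⟨w, hvw⟩ := hv
    right
    have hsupp : (H.connectedComponentMk v).supp = {v, w} := by
      ext u
      simp only [ConnectedComponent.mem_supp_iff, ConnectedComponent.eq, Set.mem_insert_iff,
        Set.mem_singleton_iff]
      constructor
      · intro h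
        rcases hreach u h with rfl | hadj
        · exact Or.inl rfl
        · exact Or.inr (hdeg _ _ _ hadj hvw)
      · rintro (rfl | rfl)
        · exact Reachable.refl _
        · exact hvw.symm.reachable
    rw [hmk, hsupp]
    have hne : v ≠ w := hvw.ne
    refine ⟨⟨⟨fun x => if (x : W) = v then 0 else 1,
      fun i => if i = 0 then ⟨v, by simp⟩ else ⟨w, by simp⟩, ?_, ?_⟩, ?_⟩⟩
    · rintro ⟨x, hx⟩
      rcases hx with hx | hx
      · simp [hx]
      · simp only [Set.mem_singleton_iff] at hx
        subst hx
        simp [Ne.symm hne]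
    · intro i
      fin_cases i <;> simp [Ne.symm hne]
    · rintro ⟨x, hx⟩ ⟨y, hy⟩
      simp only [Set.mem_insert_iff, Set.mem_singleton_iff] at hx hy
      rcases hx with rfl | rfl <;> rcases hy with rfl | rfl <;>
        simp [comap_adj, top_adj, hvw, hvw.symm, H.irrefl, hne, Ne.symm hne]
  · left
    push_neg at hv
    have hsupp : (H.connectedComponentMk v).supp = {v} := by
      ext u
      simp only [ConnectedComponent.mem_supp_iff, ConnectedComponent.eq,
        Set.mem_singleton_iff]
      constructor
      · intro h
        rcases hreach u h with rfl | hadj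
        · rfl
        · exact absurd hadj (hv u)
      · rintro rfl; exact Reachable.refl _
    rw [hmk, hsupp]
    refine ⟨⟨⟨fun _ => 0, fun _ => ⟨v, rfl⟩, ?_, ?_⟩, ?_⟩⟩
    · rintro ⟨x, hx⟩
      simp only [Set.mem_singleton_iff] at hx
      subst hx; rfl
    · intro i; fin_cases i; rfl
    · rintro ⟨x, hx⟩ ⟨y, hy⟩
      simp only [Set.mem_singleton_iff] at hx hy
      subst hx; subst hy
      simp [comap_adj, top_adj, H.irrefl]

theorem stmt7 {V : Type*} [Fintype V] (G : SimpleGraph V)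
    (htf : G.CliqueFree 3)
    (huniq : ∀ u v : V, u ≠ v → ¬ G.Adj u v → ∃! w, G.Adj u w ∧ G.Adj w v)
    (S : Set V) :
    G.MutualVisibilitySet S ↔
      ∀ c : (G.induce S).ConnectedComponent,
        Nonempty ((G.induce S).induce c.supp ≃g (⊤ : SimpleGraph (Fin 1))) ∨
        Nonempty ((G.induce S).induce c.supp ≃g (⊤ : SimpleGraph (Fin 2))) := by
  constructor
  · intro hMV
    apply aux_iso_of_deg
    rintro ⟨a, haS⟩ ⟨b, hbS⟩ ⟨c, hcS⟩ hba hbc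
    simp only [SimpleGraph.comap_adj, Function.Embedding.coe_subtype] at hba hbc
    by_contra hne
    have hac : a ≠ c := fun h => hne (by simpa using h)
    have hnadj : ¬ G.Adj a c := by
      intro h
      exact htf {a, b, c} (SimpleGraph.is3Clique_triple_iff.2 ⟨hba.symm, h, hbc⟩)
    obtain ⟨w, ⟨hw1, hw2⟩, hwuniq⟩ := huniq a c hac hnadj
    have hdist : G.dist a c = 2 := by
      have hle : G.dist a c ≤ 2 := by
        have := G.dist_le (SimpleGraph.Walk.cons hw1 (SimpleGraph.Walk.cons hw2 SimpleGraph.Walk.nil))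
        simpa using this
      have h0 : G.dist a c ≠ 0 := by
        intro h
        rcases SimpleGraph.dist_eq_zero_iff_eq_or_not_reachable.1 h with h' | h'
        · exact hac h'
        · exact h' (SimpleGraph.Walk.cons hw1 (SimpleGraph.Walk.cons hw2 SimpleGraph.Walk.nil)).reachable
      have h1 : G.dist a c ≠ 1 := fun h => hnadj (SimpleGraph.dist_eq_one_iff_adj.1 h)
      omega
    obtain ⟨p, hlen, hsupp⟩ := hMV a haS c hcS
    rw [hdist] at hlen
    cases p with
    | nil => simp at hlen
    | @cons _ x _ h q =>
      cases q with
      | nil => simp at hlen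
      | @cons _ y _ h' q' =>
        cases q' with
        | nil =>
          have hxb : x = b := by
            rw [hwuniq x ⟨h, h'⟩, ← hwuniq b ⟨hba.symm, hbc⟩]
          have hxS : x ∈ S := by rw [hxb]; exact hbS
          have hmem : x ∈ (SimpleGraph.Walk.cons h (SimpleGraph.Walk.cons h' SimpleGraph.Walk.nil)).support := by
            simp
          rcases hsupp x hmem hxS with h1 | h1
          · subst h1; exact (G.irrefl h)
          · subst h1; exact (G.irrefl h')
        | cons h'' q'' =>
          simp only [SimpleGraph.Walk.length_cons] at hlen
          omega
  · intro hc
    have hdeg := aux_deg_of_iso _ hc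
    intro u hu v hv
    by_cases huv : u = v
    · subst huv
      exact ⟨SimpleGraph.Walk.nil, by simp [SimpleGraph.dist_self], by simp⟩
    by_cases hadj : G.Adj u v
    · refine ⟨SimpleGraph.Walk.cons hadj SimpleGraph.Walk.nil, ?_, ?_⟩
      · rw [SimpleGraph.dist_eq_one_iff_adj.2 hadj]; simp
      · intro w hw _
        simpa using hw
    · obtain ⟨w, ⟨hw1, hw2⟩, hwuniq⟩ := huniq u v huv hadj
      refine ⟨SimpleGraph.Walk.cons hw1 (SimpleGraph.Walk.cons hw2 SimpleGraph.Walk.nil), ?_, ?_⟩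
      · have hle : G.dist u v ≤ 2 := by
          have := G.dist_le (SimpleGraph.Walk.cons hw1 (SimpleGraph.Walk.cons hw2 SimpleGraph.Walk.nil))
          simpa using this
        have h0 : G.dist u v ≠ 0 := by
          intro h
          rcases SimpleGraph.dist_eq_zero_iff_eq_or_not_reachable.1 h with h' | h'
          · exact huv h'
          · exact h' (SimpleGraph.Walk.cons hw1 (SimpleGraph.Walk.cons hw2 SimpleGraph.Walk.nil)).reachable
        have h1 : G.dist u v ≠ 1 := fun h => hadj (SimpleGraph.dist_eq_one_iff_adj.1 h)
        simp only [SimpleGraph.Walk.length_cons, SimpleGraph.Walk.length_nil]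
        omega
      · intro x hx hxS
        simp only [SimpleGraph.Walk.support_cons, SimpleGraph.Walk.support_nil,
          List.mem_cons, List.mem_singleton] at hx
        rcases hx with rfl | rfl | rfl | h
        · exact Or.inl rfl
        · exfalso
          have := hdeg ⟨u, hu⟩ ⟨x, hxS⟩ ⟨v, hv⟩ (by simpa using hw1.symm) (by simpa using hw2)
          exact huv (by simpa using this)
        · exact Or.inr rfl
        · simp at h
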